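/- Let d, m ≥ 1. There exists a Borel-measurable map Σ from (Matrix (Fin d) (Fin m) ℝ) × (Matrix (Fin d) (Fin m) ℝ) to Matrix (Fin m) (Fin m) ℝ such that for every pair (σ, σ̄) of real d×m matrices with σσᵀ = σ̄σ̄ᵀ, the matrix U := Σ(σ, σ̄) satisfies UUᵀ = 1 and σU = σ̄. -/

import Mathlib

open Matrix

/-- The standard Borel σ-algebra on the space of real `d × m` matrices (viewed as a
finite-dimensional real normed/topological space). -/
noncomputable instance matrixMeasurableSpace {d m : ℕ} :
    MeasurableSpace (Matrix (Fin d) (Fin m) ℝ) := borel _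


instance matrixBorelSpace {d m : ℕ} : BorelSpace (Matrix (Fin d) (Fin m) ℝ) := ⟨rfl⟩

theorem matrixMS_eq {d m : ℕ} :
    (matrixMeasurableSpace : MeasurableSpace (Matrix (Fin d) (Fin m) ℝ))
      = (MeasurableSpace.pi : MeasurableSpace (Fin d → Fin m → ℝ)) :=
  (BorelSpace.measurable_eq (α := Fin d → Fin m → ℝ)).symm

theorem measurable_matrix_of {d m : ℕ} {α : Type*} [MeasurableSpace α]
    {f : α → Matrix (Fin d) (Fin m) ℝ} (h : ∀ i j, Measurable fun x => f x i j) :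
    Measurable f := by
  have hpi : @Measurable α (Fin d → Fin m → ℝ) _ MeasurableSpace.pi f := by
    exact measurable_pi_iff.2 fun i => measurable_pi_iff.2 (h i)
  exact hpi.mono le_rfl (le_of_eq matrixMS_eq)

theorem measurable_entry {d m : ℕ} (i : Fin d) (j : Fin m) :
    Measurable fun σ : Matrix (Fin d) (Fin m) ℝ => σ i j := by
  have hc : Continuous fun σ : Matrix (Fin d) (Fin m) ℝ => σ i j :=
    (continuous_apply j).comp (continuous_apply i)
  exact hc.measurable

open Finset
variable {m : ℕ}

noncomputable def gs (v : ℕ → Fin m → ℝ) : ℕ → Fin m → ℝ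
  | j =>
    let w : Fin m → ℝ := v j - ∑ i : Fin j, (v j ⬝ᵥ gs v i) • gs v i
    if w ⬝ᵥ w = 0 then 0 else (Real.sqrt (w ⬝ᵥ w))⁻¹ • w
  termination_by j => j
  decreasing_by exact i.isLt

noncomputable def gw (v : ℕ → Fin m → ℝ) (j : ℕ) : Fin m → ℝ :=
  v j - ∑ i ∈ Finset.range j, (v j ⬝ᵥ gs v i) • gs v i

theorem gs_def (v : ℕ → Fin m → ℝ) (j : ℕ) :
    gs v j = if gw v j ⬝ᵥ gw v j = 0 then 0 else (Real.sqrt (gw v j ⬝ᵥ gw v j))⁻¹ • gw v j := by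
  rw [gs]
  have : gw v j = v j - ∑ i : Fin j, (v j ⬝ᵥ gs v i) • gs v i := by
    rw [gw, ← Fin.sum_univ_eq_sum_range]
  rw [← this]

theorem sum_dotProduct' {s : Finset ℕ} (f : ℕ → Fin m → ℝ) (x : Fin m → ℝ) :
    (∑ i ∈ s, f i) ⬝ᵥ x = ∑ i ∈ s, f i ⬝ᵥ x := by
  simp [dotProduct, Finset.sum_mul, Finset.sum_apply]
  exact Finset.sum_comm

theorem dotProduct_sum' {s : Finset ℕ} (f : ℕ → Fin m → ℝ) (x : Fin m → ℝ) :
    x ⬝ᵥ (∑ i ∈ s, f i) = ∑ i ∈ s, x ⬝ᵥ f i := by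
  simp [dotProduct, Finset.mul_sum, Finset.sum_apply]
  exact Finset.sum_comm

theorem gw_dot_nonneg (v : ℕ → Fin m → ℝ) (j : ℕ) : 0 ≤ gw v j ⬝ᵥ gw v j :=
  Finset.sum_nonneg fun i _ => mul_self_nonneg _

theorem gs_self_dot (v : ℕ → Fin m → ℝ) (j : ℕ) :
    gs v j ⬝ᵥ gs v j = if gw v j ⬝ᵥ gw v j = 0 then 0 else 1 := by
  rw [gs_def]
  split
  · simp
  · rename_i h
    rw [smul_dotProduct, dotProduct_smul, smul_eq_mul, smul_eq_mul, ← mul_assoc, ← mul_inv]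
    rw [Real.mul_self_sqrt (gw_dot_nonneg v j)]
    exact inv_mul_cancel₀ h

theorem gs_eq_zero (v : ℕ → Fin m → ℝ) {j : ℕ} (h : gw v j ⬝ᵥ gw v j = 0) : gs v j = 0 := by
  rw [gs_def, if_pos h]

theorem gs_self_dot_cases (v : ℕ → Fin m → ℝ) (j : ℕ) :
    (gs v j = 0 ∧ gs v j ⬝ᵥ gs v j = 0) ∨ gs v j ⬝ᵥ gs v j = 1 := by
  rw [gs_self_dot]
  split
  · exact Or.inl ⟨gs_eq_zero v ‹_›, rfl⟩
  · exact Or.inr rfl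

/-- Key orthogonality: both `gw v j` and `gs v j` are orthogonal to all previous `gs v i`. -/
theorem gs_orth (v : ℕ → Fin m → ℝ) :
    ∀ j i, i < j → gw v j ⬝ᵥ gs v i = 0 ∧ gs v j ⬝ᵥ gs v i = 0 := by
  intro j
  induction j using Nat.strong_induction_on with
  | _ j IH =>
    -- pairwise orthogonality below j
    have pair : ∀ k l, k < j → l < j → k ≠ l → gs v k ⬝ᵥ gs v l = 0 := by
      intro k l hk hl hne
      rcases lt_or_gt_of_ne hne with h | h
      · rw [dotProduct_comm]; exact (IH l hl k h).2
      · exact (IH k hk l h).2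
    intro i hij
    have h1 : gw v j ⬝ᵥ gs v i = 0 := by
      rw [gw, sub_dotProduct, sum_dotProduct']
      rcases gs_self_dot_cases v i with ⟨hz, _⟩ | ho
      · simp [hz]
      · have : ∀ k ∈ Finset.range j, ((v j ⬝ᵥ gs v k) • gs v k) ⬝ᵥ gs v i
            = if k = i then v j ⬝ᵥ gs v i else 0 := by
          intro k hk
          rw [Finset.mem_range] at hk
          rw [smul_dotProduct, smul_eq_mul]
          split
          · rename_i hki; subst hki; rw [ho, mul_one]
          · rw [pair k i hk hij ‹_›, mul_zero]
        rw [Finset.sum_congr rfl this, Finset.sum_ite_eq' _ i, if_pos (Finset.mem_range.2 hij),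
          sub_self]
    refine ⟨h1, ?_⟩
    rw [gs_def]
    split
    · simp
    · rw [smul_dotProduct, h1, smul_eq_mul, mul_zero]

theorem gs_orthogonal (v : ℕ → Fin m → ℝ) {i j : ℕ} (h : i ≠ j) : gs v i ⬝ᵥ gs v j = 0 := by
  rcases lt_or_gt_of_ne h with hl | hl
  · rw [dotProduct_comm]; exact (gs_orth v j i hl).2
  · exact (gs_orth v i j hl).2

theorem gw_eq_smul_gs (v : ℕ → Fin m → ℝ) (j : ℕ) :
    gw v j = Real.sqrt (gw v j ⬝ᵥ gw v j) • gs v j := by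
  rw [gs_def]
  split
  · rename_i h
    rw [(dotProduct_self_eq_zero).1 h]; simp
  · rename_i h
    rw [smul_smul, mul_inv_cancel₀, one_smul]
    exact Real.sqrt_ne_zero'.2 (lt_of_le_of_ne (gw_dot_nonneg v j) (Ne.symm h))

/-- `v j` expansion used everywhere. -/
theorem v_eq_gw_add (v : ℕ → Fin m → ℝ) (j : ℕ) :
    v j = gw v j + ∑ i ∈ Finset.range j, (v j ⬝ᵥ gs v i) • gs v i := by
  rw [gw]; abel

theorem v_dot_gs_later (v : ℕ → Fin m → ℝ) {j k : ℕ} (h : j < k) : v j ⬝ᵥ gs v k = 0 := by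
  conv_lhs => rw [v_eq_gw_add v j]
  rw [add_dotProduct, sum_dotProduct', gw_eq_smul_gs, smul_dotProduct,
    gs_orthogonal v (Nat.ne_of_lt h), smul_eq_mul, mul_zero, zero_add]
  refine Finset.sum_eq_zero fun i hi => ?_
  rw [Finset.mem_range] at hi
  rw [smul_dotProduct, gs_orthogonal v (Nat.ne_of_lt (hi.trans h)), smul_eq_mul, mul_zero]

theorem v_dot_gw (v : ℕ → Fin m → ℝ) (j : ℕ) : v j ⬝ᵥ gw v j = gw v j ⬝ᵥ gw v j := by
  conv_lhs => rw [v_eq_gw_add v j]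
  rw [add_dotProduct, sum_dotProduct']
  have : ∀ i ∈ Finset.range j, ((v j ⬝ᵥ gs v i) • gs v i) ⬝ᵥ gw v j = 0 := by
    intro i hi
    rw [Finset.mem_range] at hi
    rw [smul_dotProduct, smul_eq_mul, dotProduct_comm (gs v i) (gw v j), (gs_orth v j i hi).1, mul_zero]
  rw [Finset.sum_congr rfl this, Finset.sum_const_zero, add_zero]

theorem v_dot_gs_smul (v : ℕ → Fin m → ℝ) (j : ℕ) :
    (v j ⬝ᵥ gs v j) • gs v j = gw v j := by
  rw [gs_def]
  split
  · rename_i h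
    rw [(dotProduct_self_eq_zero).1 h]; simp
  · rename_i h
    rw [dotProduct_smul, smul_eq_mul, v_dot_gw, smul_smul]
    rw [show (Real.sqrt (gw v j ⬝ᵥ gw v j))⁻¹ * (gw v j ⬝ᵥ gw v j) * (Real.sqrt (gw v j ⬝ᵥ gw v j))⁻¹
        = (gw v j ⬝ᵥ gw v j) * (Real.sqrt (gw v j ⬝ᵥ gw v j) * Real.sqrt (gw v j ⬝ᵥ gw v j))⁻¹ by
      rw [mul_inv]; ring,
      Real.mul_self_sqrt (gw_dot_nonneg v j), mul_inv_cancel₀ h, one_smul]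

/-- Expansion/completeness: for `j < n`. -/
theorem gs_expansion (v : ℕ → Fin m → ℝ) {j n : ℕ} (h : j < n) :
    ∑ k ∈ Finset.range n, (v j ⬝ᵥ gs v k) • gs v k = v j := by
  have hsplit : Finset.range n = Finset.range (j+1) ∪ Finset.Ico (j+1) n := by
    rw [Finset.range_eq_Ico, Finset.range_eq_Ico,
      Finset.Ico_union_Ico_eq_Ico (Nat.zero_le _) (show j + 1 ≤ n from h)]
  rw [hsplit, Finset.sum_union (by
    simp only [Finset.disjoint_left, Finset.mem_Ico, Finset.mem_range]
    omega)]
  have h2 : ∑ k ∈ Finset.Ico (j+1) n, (v j ⬝ᵥ gs v k) • gs v k = 0 := by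
    refine Finset.sum_eq_zero fun k hk => ?_
    rw [Finset.mem_Ico] at hk
    rw [v_dot_gs_later v (Nat.lt_of_succ_le hk.1), zero_smul]
  rw [h2, add_zero, Finset.sum_range_succ, v_dot_gs_smul]
  conv_rhs => rw [v_eq_gw_add v j]
  abel

/-- Gram invariance: the Gram–Schmidt inner products depend only on the Gram matrix. -/
theorem gs_gram (v v' : ℕ → Fin m → ℝ) (n : ℕ)
    (h : ∀ i j, i < n → j < n → v i ⬝ᵥ v j = v' i ⬝ᵥ v' j) :
    ∀ k, k < n → (∀ j, j < n → v j ⬝ᵥ gs v k = v' j ⬝ᵥ gs v' k) ∧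
      gw v k ⬝ᵥ gw v k = gw v' k ⬝ᵥ gw v' k := by
  intro k
  induction k using Nat.strong_induction_on with
  | _ k IH =>
    intro hk
    have hgw : ∀ j, j < n → v j ⬝ᵥ gw v k = v' j ⬝ᵥ gw v' k := by
      intro j hj
      rw [gw, gw, dotProduct_sub, dotProduct_sub, dotProduct_sum', dotProduct_sum']
      congr 1
      · exact h j k hj hk
      · refine Finset.sum_congr rfl fun i hi => ?_
        rw [Finset.mem_range] at hi
        rw [dotProduct_smul, dotProduct_smul, smul_eq_mul, smul_eq_mul,
          (IH i hi (hi.trans hk)).1 k hk, (IH i hi (hi.trans hk)).1 j hj]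
    have hww : gw v k ⬝ᵥ gw v k = gw v' k ⬝ᵥ gw v' k := by
      rw [← v_dot_gw, ← v_dot_gw]; exact hgw k hk
    refine ⟨fun j hj => ?_, hww⟩
    rw [gs_def, gs_def, ← hww]
    split
    · simp
    · rw [dotProduct_smul, dotProduct_smul, hgw j hj]

theorem gs_gram_self (v v' : ℕ → Fin m → ℝ) (n : ℕ)
    (h : ∀ i j, i < n → j < n → v i ⬝ᵥ v j = v' i ⬝ᵥ v' j) {k : ℕ} (hk : k < n) :
    gs v k ⬝ᵥ gs v k = gs v' k ⬝ᵥ gs v' k := by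
  rw [gs_self_dot, gs_self_dot, (gs_gram v v' n h k hk).2]

theorem gs_of_v_zero (v : ℕ → Fin m → ℝ) {j : ℕ} (h : v j = 0) : gs v j = 0 := by
  have hgw : gw v j = 0 := by
    rw [gw, h]
    rw [show ∑ i ∈ Finset.range j, ((0 : Fin m → ℝ) ⬝ᵥ gs v i) • gs v i = 0 from
      Finset.sum_eq_zero fun i _ => by rw [zero_dotProduct, zero_smul]]
    simp
  exact gs_eq_zero v (by rw [hgw]; simp)

/- Matrix helpers -/
theorem vecMulVec_mul_vecMulVec (a b x y : Fin m → ℝ) :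
    vecMulVec a b * vecMulVec x y = (b ⬝ᵥ x) • vecMulVec a y := by
  ext p q
  simp only [Matrix.mul_apply, vecMulVec_apply, Matrix.smul_apply, smul_eq_mul, dotProduct,
    Finset.sum_mul, Finset.mul_sum]
  apply Finset.sum_congr rfl
  intro i _
  ring

theorem vecMulVec_transpose (a b : Fin m → ℝ) :
    (vecMulVec a b)ᵀ = vecMulVec b a := by
  ext p q
  simp [vecMulVec_apply, Matrix.transpose_apply, mul_comm]

theorem smul_vecMulVec_self (a : Fin m → ℝ) (h : a ⬝ᵥ a = 0 ∨ a ⬝ᵥ a = 1) :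
    (a ⬝ᵥ a) • vecMulVec a a = vecMulVec a a := by
  rcases h with h | h
  · have : a = 0 := dotProduct_self_eq_zero.1 h
    subst this
    ext p q; simp [vecMulVec_apply]
  · rw [h, one_smul]

/-! ### The construction -/
section Construction
variable {d : ℕ}

open scoped Classical

noncomputable def vf (σ : Matrix (Fin d) (Fin m) ℝ) : ℕ → Fin m → ℝ := fun j =>
  if h : j < d then σ ⟨j, h⟩ else if h2 : j - d < m then Pi.single (⟨j - d, h2⟩ : Fin m) 1 else 0

noncomputable def uu (σ : Matrix (Fin d) (Fin m) ℝ) (k : ℕ) : Fin m → ℝ := gs (vf σ) k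

theorem vf_lt (σ : Matrix (Fin d) (Fin m) ℝ) {j : ℕ} (h : j < d) : vf σ j = σ ⟨j, h⟩ := by
  rw [vf]; rw [dif_pos h]

theorem vf_single (σ : Matrix (Fin d) (Fin m) ℝ) {q : ℕ} (hq : q < m) :
    vf σ (d + q) = Pi.single (⟨q, hq⟩ : Fin m) 1 := by
  rw [vf]
  rw [dif_neg (by omega)]
  split
  · rename_i h2
    exact congrArg (fun i : Fin m => Pi.single i (1 : ℝ)) (Fin.ext (by simp))
  · rename_i h2
    exact absurd hq (by omega)

theorem vf_dm (σ : Matrix (Fin d) (Fin m) ℝ) : vf σ (d + m) = 0 := by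
  rw [vf]
  rw [dif_neg (by omega), dif_neg (by omega)]

theorem uu_dm (σ : Matrix (Fin d) (Fin m) ℝ) : uu σ (d + m) = 0 :=
  gs_of_v_zero _ (vf_dm σ)

theorem uu_complete_mat (σ : Matrix (Fin d) (Fin m) ℝ) :
    ∑ k ∈ Finset.range (d + m), vecMulVec (uu σ k) (uu σ k) = 1 := by
  ext p q
  rw [Matrix.sum_apply]
  have h := gs_expansion (vf σ) (show d + (p : ℕ) < d + m by omega)
  rw [vf_single σ p.isLt] at h
  have h2 := congrFun h q
  simp only [Finset.sum_apply, Pi.smul_apply, smul_eq_mul, single_dotProduct, one_mul,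
    Pi.single_apply] at h2
  rw [show (⟨(p : ℕ), p.isLt⟩ : Fin m) = p from Fin.eta p p.isLt] at h2
  rw [Matrix.one_apply]
  simp only [vecMulVec_apply, uu]
  rw [h2]
  by_cases hpq : p = q <;> simp [hpq, eq_comm]

theorem uu_trace (σ : Matrix (Fin d) (Fin m) ℝ) :
    ∑ k ∈ Finset.range (d + m), uu σ k ⬝ᵥ uu σ k = (m : ℝ) := by
  have : ∀ k, uu σ k ⬝ᵥ uu σ k = ∑ p : Fin m, uu σ k p * uu σ k p := fun k => rfl
  simp only [this]
  rw [Finset.sum_comm]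
  have : ∀ p : Fin m, ∑ k ∈ Finset.range (d + m), uu σ k p * uu σ k p = 1 := by
    intro p
    have := congrFun (congrFun (uu_complete_mat σ) p) p
    rw [Matrix.sum_apply] at this
    simp only [vecMulVec_apply] at this
    rw [this, Matrix.one_apply_eq]
  simp [this]

theorem vf_gram {σ σ' : Matrix (Fin d) (Fin m) ℝ} (hG : σ * σᵀ = σ' * σ'ᵀ) :
    ∀ i j, i < d → j < d → vf σ i ⬝ᵥ vf σ j = vf σ' i ⬝ᵥ vf σ' j := by
  intro i j hi hj
  rw [vf_lt σ hi, vf_lt σ hj, vf_lt σ' hi, vf_lt σ' hj]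
  have := congrFun (congrFun hG ⟨i, hi⟩) ⟨j, hj⟩
  simpa only [Matrix.mul_apply, Matrix.transpose_apply, dotProduct] using this

noncomputable def tailS (σ : Matrix (Fin d) (Fin m) ℝ) : Finset ℕ :=
  (Finset.range m).filter fun i => uu σ (d + i) ≠ 0

noncomputable def eI (σ : Matrix (Fin d) (Fin m) ℝ) (k : ℕ) : ℕ :=
  ((tailS σ).sort (· ≤ ·)).getD k m

theorem eI_mem {σ : Matrix (Fin d) (Fin m) ℝ} {k : ℕ} (hk : k < (tailS σ).card) :
    eI σ k ∈ tailS σ := by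
  rw [eI, List.getD_eq_getElem _ _ (by rw [Finset.length_sort]; exact hk)]
  exact (Finset.mem_sort _).1 (List.getElem_mem _)

theorem eI_default {σ : Matrix (Fin d) (Fin m) ℝ} {k : ℕ} (hk : (tailS σ).card ≤ k) :
    eI σ k = m := by
  rw [eI, List.getD_eq_default _ _ (by rw [Finset.length_sort]; exact hk)]

theorem uu_eI_zero {σ : Matrix (Fin d) (Fin m) ℝ} {k : ℕ} (hk : (tailS σ).card ≤ k) :
    uu σ (d + eI σ k) = 0 := by
  rw [eI_default hk]; exact uu_dm σ

theorem uu_eI_ne {σ : Matrix (Fin d) (Fin m) ℝ} {k : ℕ} (hk : k < (tailS σ).card) :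
    uu σ (d + eI σ k) ≠ 0 := by
  have := eI_mem hk
  rw [tailS, Finset.mem_filter] at this
  exact this.2

theorem eI_lt_m {σ : Matrix (Fin d) (Fin m) ℝ} {k : ℕ} (hk : k < (tailS σ).card) :
    eI σ k < m := by
  have := eI_mem hk
  rw [tailS, Finset.mem_filter, Finset.mem_range] at this
  exact this.1

theorem eI_inj {σ : Matrix (Fin d) (Fin m) ℝ} {k k' : ℕ} (hk : k < (tailS σ).card)
    (hk' : k' < (tailS σ).card) (h : eI σ k = eI σ k') : k = k' := by
  have hs := Finset.sortedLT_sort (tailS σ)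
  have hlen : k < ((tailS σ).sort (· ≤ ·)).length := by rw [Finset.length_sort]; exact hk
  have hlen' : k' < ((tailS σ).sort (· ≤ ·)).length := by rw [Finset.length_sort]; exact hk'
  rw [eI, eI, List.getD_eq_getElem _ _ hlen, List.getD_eq_getElem _ _ hlen'] at h
  by_contra hne
  rcases Nat.lt_or_ge k k' with hlt | hge
  · exact absurd h (ne_of_lt (hs (show (⟨k, hlen⟩ : Fin _) < ⟨k', hlen'⟩ from hlt)))
  · have : k' < k := by omega
    exact absurd h.symm
      (ne_of_lt (hs (show (⟨k', hlen'⟩ : Fin _) < ⟨k, hlen⟩ from this)))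

theorem uu_self_dot_one {σ : Matrix (Fin d) (Fin m) ℝ} {k : ℕ} (h : uu σ k ≠ 0) :
    uu σ k ⬝ᵥ uu σ k = 1 := by
  rcases gs_self_dot_cases (vf σ) k with ⟨hz, _⟩ | ho
  · exact absurd hz h
  · exact ho

theorem tail_dot (σ : Matrix (Fin d) (Fin m) ℝ) (k k' : ℕ) :
    uu σ (d + eI σ k) ⬝ᵥ uu σ (d + eI σ k') =
      if k = k' ∧ k < (tailS σ).card then 1 else 0 := by
  by_cases hk : k < (tailS σ).card
  · by_cases hk' : k' < (tailS σ).card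
    · by_cases hkk : k = k'
      · subst hkk
        rw [if_pos ⟨rfl, hk⟩]
        exact uu_self_dot_one (uu_eI_ne hk)
      · rw [if_neg (by tauto)]
        exact gs_orthogonal _ (by
          intro hc
          exact hkk (eI_inj hk hk' (by omega)))
    · rw [uu_eI_zero (le_of_not_gt hk'), dotProduct_zero, if_neg (by rintro ⟨rfl, h⟩; omega)]
  · rw [uu_eI_zero (le_of_not_gt hk), zero_dotProduct, if_neg (by tauto)]

theorem head_tail_dot (σ : Matrix (Fin d) (Fin m) ℝ) {j : ℕ} (hj : j < d) (k : ℕ) :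
    uu σ j ⬝ᵥ uu σ (d + eI σ k) = 0 := by
  by_cases hk : k < (tailS σ).card
  · exact gs_orthogonal _ (by omega)
  · rw [uu_eI_zero (le_of_not_gt hk), dotProduct_zero]

end Construction

section Main
variable {d : ℕ}
open scoped Classical

theorem sum_split {M : Type*} [AddCommMonoid M] (f : ℕ → M) :
    ∑ k ∈ Finset.range (d + m), f k
      = ∑ k ∈ Finset.range d, f k + ∑ i ∈ Finset.range m, f (d + i) := by
  rw [← Finset.sum_range_add_sum_Ico f (Nat.le_add_right d m), Finset.sum_Ico_eq_sum_range]
  congr 1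
  simp [Nat.add_sub_cancel_left]

theorem card_tail_eq {σ σ' : Matrix (Fin d) (Fin m) ℝ} (hG : σ * σᵀ = σ' * σ'ᵀ) :
    (tailS σ).card = (tailS σ').card := by
  have key : ∀ τ : Matrix (Fin d) (Fin m) ℝ,
      ((tailS τ).card : ℝ) = (m : ℝ) - ∑ j ∈ Finset.range d, uu τ j ⬝ᵥ uu τ j := by
    intro τ
    have h1 : ((tailS τ).card : ℝ)
        = ∑ i ∈ Finset.range m, (if uu τ (d + i) ≠ 0 then (1 : ℝ) else 0) := by
      rw [tailS, Finset.natCast_card_filter]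
    have h2 : ∀ i, (if uu τ (d + i) ≠ 0 then (1 : ℝ) else 0) = uu τ (d + i) ⬝ᵥ uu τ (d + i) := by
      intro i
      by_cases h : uu τ (d + i) = 0
      · simp [h]
      · rw [if_pos h, uu_self_dot_one h]
    have h3 := uu_trace τ
    rw [sum_split (fun k => uu τ k ⬝ᵥ uu τ k)] at h3
    rw [h1, Finset.sum_congr rfl (fun i _ => h2 i)]
    linarith
  have hgram := vf_gram hG
  have hsum : ∑ j ∈ Finset.range d, uu σ j ⬝ᵥ uu σ j
      = ∑ j ∈ Finset.range d, uu σ' j ⬝ᵥ uu σ' j := by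
    refine Finset.sum_congr rfl fun j hj => ?_
    rw [Finset.mem_range] at hj
    exact gs_gram_self (vf σ) (vf σ') d hgram hj
  have : ((tailS σ).card : ℝ) = ((tailS σ').card : ℝ) := by rw [key σ, key σ', hsum]
  exact_mod_cast this

theorem vecMulVec_zero_left (b : Fin m → ℝ) : vecMulVec (0 : Fin m → ℝ) b = 0 := by
  ext p q; simp [vecMulVec_apply]

theorem tail_sum_reindex (σ : Matrix (Fin d) (Fin m) ℝ) {M : Type*} [AddCommMonoid M]
    (f : ℕ → M) (hf0 : ∀ i ∈ Finset.range m, i ∉ tailS σ → f i = 0) (hfm : f m = 0) :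
    ∑ k ∈ Finset.range m, f (eI σ k) = ∑ i ∈ Finset.range m, f i := by
  have hcard : (tailS σ).card ≤ m := by
    calc (tailS σ).card ≤ (Finset.range m).card := Finset.card_filter_le _ _
    _ = m := Finset.card_range m
  have h1 : ∑ k ∈ Finset.range m, f (eI σ k)
      = ∑ k ∈ Finset.range ((tailS σ).card), f (eI σ k) := by
    rw [← Finset.sum_range_add_sum_Ico (fun k => f (eI σ k)) hcard]
    have : ∑ k ∈ Finset.Ico ((tailS σ).card) m, f (eI σ k) = 0 := by
      refine Finset.sum_eq_zero fun k hk => ?_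
      rw [Finset.mem_Ico] at hk
      rw [eI_default hk.1, hfm]
    rw [this, add_zero]
  have h2 : ∑ k ∈ Finset.range ((tailS σ).card), f (eI σ k) = ∑ i ∈ tailS σ, f i := by
    refine Finset.sum_bij (fun k hk => eI σ k) ?_ ?_ ?_ ?_
    · intro k hk; exact eI_mem (Finset.mem_range.1 hk)
    · intro k hk k' hk' h
      exact eI_inj (Finset.mem_range.1 hk) (Finset.mem_range.1 hk') h
    · intro b hb
      have hb' : b ∈ (tailS σ).sort (· ≤ ·) := (Finset.mem_sort _).2 hb
      rcases List.mem_iff_get.1 hb' with ⟨n, hn⟩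
      have hlen : (n : ℕ) < (tailS σ).card :=
        lt_of_lt_of_eq n.isLt (Finset.length_sort _)
      refine ⟨(n : ℕ), Finset.mem_range.2 hlen, ?_⟩
      show ((tailS σ).sort (· ≤ ·)).getD (n : ℕ) m = b
      rw [List.getD_eq_get _ _ n]
      exact hn
    · intro k hk; rfl
  rw [h1, h2]
  exact Finset.sum_subset (Finset.filter_subset _ _) hf0

noncomputable def TT (σ σ' : Matrix (Fin d) (Fin m) ℝ) : Matrix (Fin m) (Fin m) ℝ :=
  ∑ j ∈ Finset.range d, vecMulVec (uu σ j) (uu σ' j)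

noncomputable def KK (σ σ' : Matrix (Fin d) (Fin m) ℝ) : Matrix (Fin m) (Fin m) ℝ :=
  ∑ k ∈ Finset.range m, vecMulVec (uu σ (d + eI σ k)) (uu σ' (d + eI σ' k))

noncomputable def UU (σ σ' : Matrix (Fin d) (Fin m) ℝ) : Matrix (Fin m) (Fin m) ℝ :=
  TT σ σ' + KK σ σ'

theorem uu_self_cases (σ : Matrix (Fin d) (Fin m) ℝ) (k : ℕ) :
    uu σ k ⬝ᵥ uu σ k = 0 ∨ uu σ k ⬝ᵥ uu σ k = 1 := by
  rcases gs_self_dot_cases (vf σ) k with ⟨_, h⟩ | h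
  · exact Or.inl h
  · exact Or.inr h

theorem uu_orthogonal (σ : Matrix (Fin d) (Fin m) ℝ) {k k' : ℕ} (h : k ≠ k') :
    uu σ k ⬝ᵥ uu σ k' = 0 := gs_orthogonal _ h

theorem main_orth {σ σ' : Matrix (Fin d) (Fin m) ℝ} (hG : σ * σᵀ = σ' * σ'ᵀ) :
    UU σ σ' * (UU σ σ')ᵀ = 1 := by
  have hgram := vf_gram hG
  have hcard := card_tail_eq hG
  have hTt : (TT σ σ')ᵀ = ∑ j ∈ Finset.range d, vecMulVec (uu σ' j) (uu σ j) := by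
    rw [TT, Matrix.transpose_sum]
    exact Finset.sum_congr rfl fun j _ => vecMulVec_transpose _ _
  have hKt : (KK σ σ')ᵀ
      = ∑ k ∈ Finset.range m, vecMulVec (uu σ' (d + eI σ' k)) (uu σ (d + eI σ k)) := by
    rw [KK, Matrix.transpose_sum]
    exact Finset.sum_congr rfl fun k _ => vecMulVec_transpose _ _
  have hT : TT σ σ' * (TT σ σ')ᵀ = ∑ j ∈ Finset.range d, vecMulVec (uu σ j) (uu σ j) := by
    rw [hTt, TT, Finset.sum_mul_sum]
    refine Finset.sum_congr rfl fun j hj => ?_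
    rw [Finset.mem_range] at hj
    rw [Finset.sum_eq_single j
      (fun j' _ hne => by
        rw [vecMulVec_mul_vecMulVec, uu_orthogonal σ' (Ne.symm hne), zero_smul])
      (fun h => absurd (Finset.mem_range.2 hj) h)]
    rw [vecMulVec_mul_vecMulVec,
      show uu σ' j ⬝ᵥ uu σ' j = uu σ j ⬝ᵥ uu σ j from
        (gs_gram_self (vf σ) (vf σ') d hgram hj).symm]
    exact smul_vecMulVec_self _ (uu_self_cases σ j)
  have hK : KK σ σ' * (KK σ σ')ᵀ
      = ∑ i ∈ Finset.range m, vecMulVec (uu σ (d + i)) (uu σ (d + i)) := by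
    rw [hKt, KK, Finset.sum_mul_sum]
    have step : ∀ k ∈ Finset.range m,
        ∑ k' ∈ Finset.range m,
          vecMulVec (uu σ (d + eI σ k)) (uu σ' (d + eI σ' k)) *
            vecMulVec (uu σ' (d + eI σ' k')) (uu σ (d + eI σ k'))
        = vecMulVec (uu σ (d + eI σ k)) (uu σ (d + eI σ k)) := by
      intro k hk
      rw [Finset.mem_range] at hk
      rw [Finset.sum_eq_single k
        (fun k' _ hne => by
          rw [vecMulVec_mul_vecMulVec, tail_dot, if_neg (by tauto), zero_smul])
        (fun h => absurd (Finset.mem_range.2 hk) h)]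
      rw [vecMulVec_mul_vecMulVec, tail_dot]
      by_cases hlt : k < (tailS σ).card
      · rw [if_pos ⟨rfl, by rwa [← hcard]⟩, one_smul]
      · rw [uu_eI_zero (le_of_not_gt hlt), vecMulVec_zero_left, smul_zero]
    rw [Finset.sum_congr rfl step]
    exact tail_sum_reindex σ (fun i => vecMulVec (uu σ (d + i)) (uu σ (d + i)))
      (fun i hmem hi => by
        have h0 : uu σ (d + i) = 0 := by
          by_contra hne
          exact hi (by rw [tailS, Finset.mem_filter]; exact ⟨hmem, hne⟩)
        show vecMulVec (uu σ (d + i)) (uu σ (d + i)) = 0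
        rw [h0, vecMulVec_zero_left])
      (by
        show vecMulVec (uu σ (d + m)) (uu σ (d + m)) = 0
        rw [uu_dm, vecMulVec_zero_left])
  have hTK : TT σ σ' * (KK σ σ')ᵀ = 0 := by
    rw [hKt, TT, Finset.sum_mul_sum]
    refine Finset.sum_eq_zero fun j hj => Finset.sum_eq_zero fun k _ => ?_
    rw [Finset.mem_range] at hj
    rw [vecMulVec_mul_vecMulVec, head_tail_dot σ' hj, zero_smul]
  have hKT : KK σ σ' * (TT σ σ')ᵀ = 0 := by
    rw [hTt, KK, Finset.sum_mul_sum]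
    refine Finset.sum_eq_zero fun k _ => Finset.sum_eq_zero fun j hj => ?_
    rw [Finset.mem_range] at hj
    rw [vecMulVec_mul_vecMulVec, dotProduct_comm, head_tail_dot σ' hj, zero_smul]
  rw [UU, Matrix.transpose_add, Matrix.add_mul, Matrix.mul_add, Matrix.mul_add, hT, hK, hTK, hKT,
    add_zero, zero_add,
    ← sum_split (fun k => vecMulVec (uu σ k) (uu σ k)), uu_complete_mat]

theorem mul_vecMulVec (N : Matrix (Fin d) (Fin m) ℝ) (a b : Fin m → ℝ) :
    N * vecMulVec a b = vecMulVec (N *ᵥ a) b := by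
  ext i q
  simp only [Matrix.mul_apply, vecMulVec_apply, Matrix.mulVec, dotProduct, Finset.sum_mul]
  exact Finset.sum_congr rfl fun p _ => by ring

theorem main_mul {σ σ' : Matrix (Fin d) (Fin m) ℝ} (hG : σ * σᵀ = σ' * σ'ᵀ) :
    σ * UU σ σ' = σ' := by
  have hgram := vf_gram hG
  have hrow : ∀ (τ : Matrix (Fin d) (Fin m) ℝ) (i : Fin d) (k : ℕ), τ i ⬝ᵥ uu τ k
      = vf τ (i : ℕ) ⬝ᵥ uu τ k := by
    intro τ i k
    rw [vf_lt τ i.isLt, Fin.eta]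
  have hσK : σ * KK σ σ' = 0 := by
    rw [KK, Matrix.mul_sum]
    refine Finset.sum_eq_zero fun k _ => ?_
    rw [mul_vecMulVec]
    have : σ *ᵥ uu σ (d + eI σ k) = 0 := by
      funext i
      show σ i ⬝ᵥ uu σ (d + eI σ k) = 0
      rw [hrow σ i]
      exact v_dot_gs_later (vf σ) (by omega)
    rw [this]
    ext p q; simp [vecMulVec_apply]
  have hσT : σ * TT σ σ' = σ' := by
    rw [TT, Matrix.mul_sum]
    ext i q
    rw [Matrix.sum_apply]
    have hstep : ∀ j ∈ Finset.range d,
        (σ * vecMulVec (uu σ j) (uu σ' j)) i q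
          = (vf σ' (i : ℕ) ⬝ᵥ uu σ' j) * uu σ' j q := by
      intro j hj
      rw [Finset.mem_range] at hj
      rw [mul_vecMulVec, vecMulVec_apply]
      congr 1
      show σ i ⬝ᵥ uu σ j = _
      rw [hrow σ i]
      exact (gs_gram (vf σ) (vf σ') d hgram j hj).1 (i : ℕ) i.isLt
    rw [Finset.sum_congr rfl hstep]
    have hexp := gs_expansion (vf σ') (show (i : ℕ) < d + m by omega)
    rw [sum_split (fun k => (vf σ' (i : ℕ) ⬝ᵥ gs (vf σ') k) • gs (vf σ') k)] at hexp
    have htail : ∑ i' ∈ Finset.range m,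
        (vf σ' (i : ℕ) ⬝ᵥ gs (vf σ') (d + i')) • gs (vf σ') (d + i') = 0 := by
      refine Finset.sum_eq_zero fun i' _ => ?_
      rw [v_dot_gs_later (vf σ') (by omega), zero_smul]
    rw [htail, add_zero] at hexp
    have := congrFun hexp q
    rw [Finset.sum_apply] at this
    simp only [Pi.smul_apply, smul_eq_mul] at this
    have hgoal : ∑ x ∈ Finset.range d, vf σ' (i : ℕ) ⬝ᵥ uu σ' x * uu σ' x q
        = vf σ' (i : ℕ) q := this
    rw [hgoal, vf_lt σ' i.isLt, Fin.eta]
  rw [UU, Matrix.mul_add, hσT, hσK, add_zero]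

end Main

/-! ### Measurability -/
section Meas
variable {d : ℕ}
open scoped Classical

theorem measurable_dot {α : Type*} [MeasurableSpace α] {x y : α → Fin m → ℝ}
    (hx : ∀ p, Measurable fun a => x a p) (hy : ∀ p, Measurable fun a => y a p) :
    Measurable fun a => x a ⬝ᵥ y a := by
  show Measurable fun a => ∑ p : Fin m, x a p * y a p
  exact Finset.measurable_sum _ fun p _ => (hx p).mul (hy p)

theorem measurable_vf (j : ℕ) (p : Fin m) :
    Measurable fun σ : Matrix (Fin d) (Fin m) ℝ => vf σ j p := by
  by_cases hj : j < d
  · have he : (fun σ : Matrix (Fin d) (Fin m) ℝ => vf σ j p) = fun σ => σ ⟨j, hj⟩ p := by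
      funext σ; rw [vf_lt σ hj]
    rw [he]
    exact measurable_entry _ _
  · have he : (fun σ : Matrix (Fin d) (Fin m) ℝ => vf σ j p)
        = fun _ : Matrix (Fin d) (Fin m) ℝ =>
          (if h2 : j - d < m then Pi.single (⟨j - d, h2⟩ : Fin m) (1 : ℝ) else (0 : Fin m → ℝ)) p := by
      funext σ; rw [vf, dif_neg hj]
    rw [he]
    exact measurable_const

theorem measurable_gw_uu :
    ∀ k : ℕ, (∀ p, Measurable fun σ : Matrix (Fin d) (Fin m) ℝ => gw (vf σ) k p)
      ∧ (∀ p, Measurable fun σ : Matrix (Fin d) (Fin m) ℝ => uu σ k p) := by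
  intro k
  induction k using Nat.strong_induction_on with
  | _ k IH =>
    have hgw : ∀ p, Measurable fun σ : Matrix (Fin d) (Fin m) ℝ => gw (vf σ) k p := by
      intro p
      have he : (fun σ : Matrix (Fin d) (Fin m) ℝ => gw (vf σ) k p)
          = fun σ => vf σ k p
            - ∑ i ∈ Finset.range k, (vf σ k ⬝ᵥ uu σ i) * uu σ i p := by
        funext σ
        rw [gw]
        simp only [Pi.sub_apply, Finset.sum_apply, Pi.smul_apply, smul_eq_mul]
        rfl
      rw [he]
      refine (measurable_vf k p).sub (Finset.measurable_sum _ fun i hi => ?_)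
      rw [Finset.mem_range] at hi
      exact (measurable_dot (fun q => measurable_vf k q) (fun q => (IH i hi).2 q)).mul
        ((IH i hi).2 p)
    refine ⟨hgw, fun p => ?_⟩
    have hdot : Measurable fun σ : Matrix (Fin d) (Fin m) ℝ => gw (vf σ) k ⬝ᵥ gw (vf σ) k :=
      measurable_dot hgw hgw
    have he : (fun σ : Matrix (Fin d) (Fin m) ℝ => uu σ k p)
        = fun σ => if gw (vf σ) k ⬝ᵥ gw (vf σ) k = 0 then 0
            else (Real.sqrt (gw (vf σ) k ⬝ᵥ gw (vf σ) k))⁻¹ * gw (vf σ) k p := by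
      funext σ
      rw [uu, gs_def]
      by_cases h : gw (vf σ) k ⬝ᵥ gw (vf σ) k = 0
      · rw [if_pos h, if_pos h]; rfl
      · rw [if_neg h, if_neg h]; rfl
    rw [he]
    exact Measurable.ite (hdot (measurableSet_singleton 0)) measurable_const
      (((Real.continuous_sqrt.measurable.comp hdot).inv).mul (hgw p))

theorem measurable_uuvec (k : ℕ) (p : Fin m) :
    Measurable fun σ : Matrix (Fin d) (Fin m) ℝ => uu σ k p :=
  (measurable_gw_uu k).2 p

theorem measurableSet_uu_eq_zero (k : ℕ) :
    MeasurableSet {σ : Matrix (Fin d) (Fin m) ℝ | uu σ k = 0} := by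
  have he : {σ : Matrix (Fin d) (Fin m) ℝ | uu σ k = 0}
      = ⋂ p : Fin m, {σ | uu σ k p = 0} := by
    ext σ
    simp only [Set.mem_setOf_eq, Set.mem_iInter]
    constructor
    · intro h p; rw [h]; rfl
    · intro h; funext p; exact h p
  rw [he]
  exact MeasurableSet.iInter fun p => (measurable_uuvec k p) (measurableSet_singleton 0)

theorem measurableSet_tailS_eq (t : Finset ℕ) :
    MeasurableSet {σ : Matrix (Fin d) (Fin m) ℝ | tailS σ = t} := by
  by_cases ht : t ⊆ Finset.range m
  · have hset : {σ : Matrix (Fin d) (Fin m) ℝ | tailS σ = t}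
        = ⋂ i ∈ Finset.range m, {σ | i ∈ t ↔ uu σ (d + i) ≠ 0} := by
      ext σ
      simp only [Set.mem_setOf_eq, Set.mem_iInter]
      constructor
      · rintro rfl i hi
        simp [tailS, Finset.mem_filter, hi]
      · intro h
        ext i
        by_cases hi : i ∈ Finset.range m
        · rw [tailS, Finset.mem_filter]
          constructor
          · rintro ⟨-, hne⟩; exact (h i hi).2 hne
          · intro hit; exact ⟨hi, (h i hi).1 hit⟩
        · constructor
          · intro hmem
            exact absurd ((Finset.filter_subset _ _) hmem) hi
          · intro hmem
            exact absurd (ht hmem) hi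
    rw [hset]
    refine MeasurableSet.biInter (Finset.range m).countable_toSet fun i _ => ?_
    by_cases hit : i ∈ t
    · have : {σ : Matrix (Fin d) (Fin m) ℝ | i ∈ t ↔ uu σ (d + i) ≠ 0}
          = {σ | uu σ (d + i) = 0}ᶜ := by
        ext σ; simp [hit]
      rw [this]
      exact (measurableSet_uu_eq_zero (d + i)).compl
    · have : {σ : Matrix (Fin d) (Fin m) ℝ | i ∈ t ↔ uu σ (d + i) ≠ 0}
          = {σ | uu σ (d + i) = 0} := by
        ext σ; simp [hit]
      rw [this]
      exact measurableSet_uu_eq_zero (d + i)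
  · have hempty : {σ : Matrix (Fin d) (Fin m) ℝ | tailS σ = t} = ∅ := by
      ext σ
      simp only [Set.mem_setOf_eq, Set.mem_empty_iff_false, iff_false]
      intro h
      exact ht (h ▸ Finset.filter_subset _ _)
    rw [hempty]
    exact MeasurableSet.empty

theorem measurableSet_eI (k i : ℕ) :
    MeasurableSet {σ : Matrix (Fin d) (Fin m) ℝ | eI σ k = i} := by
  have hset : {σ : Matrix (Fin d) (Fin m) ℝ | eI σ k = i}
      = ⋃ t ∈ ((Finset.range m).powerset.filter
          fun t : Finset ℕ => (t.sort (· ≤ ·)).getD k m = i),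
        {σ | tailS σ = t} := by
    ext σ
    simp only [Set.mem_setOf_eq, Set.mem_iUnion, Finset.mem_filter, Finset.mem_powerset,
      exists_prop]
    constructor
    · intro h
      exact ⟨tailS σ, ⟨Finset.filter_subset _ _, h⟩, rfl⟩
    · rintro ⟨t, ⟨-, hgd⟩, ht⟩
      show ((tailS σ).sort (· ≤ ·)).getD k m = i
      rw [ht]
      exact hgd
  rw [hset]
  exact MeasurableSet.biUnion (Finset.countable_toSet _) fun t _ => measurableSet_tailS_eq t

theorem eI_le_m (σ : Matrix (Fin d) (Fin m) ℝ) (k : ℕ) : eI σ k ≤ m := by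
  by_cases hk : k < (tailS σ).card
  · exact le_of_lt (eI_lt_m hk)
  · rw [eI_default (le_of_not_gt hk)]

theorem measurable_uu_eI (k : ℕ) (p : Fin m) :
    Measurable fun σ : Matrix (Fin d) (Fin m) ℝ => uu σ (d + eI σ k) p := by
  have he : (fun σ : Matrix (Fin d) (Fin m) ℝ => uu σ (d + eI σ k) p)
      = fun σ => ∑ i ∈ Finset.range (m + 1), if eI σ k = i then uu σ (d + i) p else 0 := by
    funext σ
    rw [Finset.sum_ite_eq (Finset.range (m + 1)) (eI σ k) (fun i => uu σ (d + i) p),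
      if_pos (Finset.mem_range.2 (Nat.lt_succ_of_le (eI_le_m σ k)))]
  rw [he]
  exact Finset.measurable_sum _ fun i _ =>
    Measurable.ite (measurableSet_eI k i) (measurable_uuvec (d + i) p) measurable_const

theorem measurable_S :
    Measurable fun x : Matrix (Fin d) (Fin m) ℝ × Matrix (Fin d) (Fin m) ℝ =>
      UU x.1 x.2 := by
  refine measurable_matrix_of fun p q => ?_
  have he : (fun x : Matrix (Fin d) (Fin m) ℝ × Matrix (Fin d) (Fin m) ℝ => UU x.1 x.2 p q)
      = fun x => (∑ j ∈ Finset.range d, uu x.1 j p * uu x.2 j q)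
        + ∑ k ∈ Finset.range m, uu x.1 (d + eI x.1 k) p * uu x.2 (d + eI x.2 k) q := by
    funext x
    rw [UU, Matrix.add_apply, TT, KK, Matrix.sum_apply, Matrix.sum_apply]
    simp only [vecMulVec_apply]
  rw [he]
  refine Measurable.add (Finset.measurable_sum _ fun j _ => ?_)
    (Finset.measurable_sum _ fun k _ => ?_)
  · exact ((measurable_uuvec j p).comp measurable_fst).mul
      ((measurable_uuvec j q).comp measurable_snd)
  · exact ((measurable_uu_eI k p).comp measurable_fst).mul
      ((measurable_uu_eI k q).comp measurable_snd)

end Meas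

/-- There is a Borel-measurable map `Σ` assigning to each pair `(σ, σ̄)` of real `d × m`
matrices with `σσᵀ = σ̄σ̄ᵀ` an orthogonal matrix `U = Σ(σ, σ̄)` (i.e. `UUᵀ = 1`) such
that `σU = σ̄`. -/
theorem stmt2 {d m : ℕ} (hd : 1 ≤ d) (hm : 1 ≤ m) :
    ∃ S : Matrix (Fin d) (Fin m) ℝ × Matrix (Fin d) (Fin m) ℝ →
        Matrix (Fin m) (Fin m) ℝ,
      Measurable S ∧
      ∀ σ σ' : Matrix (Fin d) (Fin m) ℝ, σ * σᵀ = σ' * σ'ᵀ →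
        S (σ, σ') * (S (σ, σ'))ᵀ = 1 ∧ σ * S (σ, σ') = σ' := by
  exact ⟨fun x => UU x.1 x.2, measurable_S, fun σ σ' hG => ⟨main_orth hG, main_mul hG⟩⟩
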